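/- arXiv:2111.14536 — 3 statements merged into one kernel-verified Lean document; each statement's English description precedes it below -/
import Mathlib

section
/- Let X ∈ ℝ^{m×n}, U ∈ ℝ^{m×r}, V, V' ∈ ℝ^{r×n}, and define h(U,V) = ‖X − U·V‖_F². Then h(U,V') − h(U,V) ≤ ⟨V' − V, ∇_V h(U,V)⟩_F + (L_V/2)·‖V' − V‖_F², where ∇_V h(U,V) = −2Uᵀ·(X − U·V) and L_V = 2σ₁(Uᵀ·U) with σ₁ the largest eigenvalue of the symmetric matrix Uᵀ·U. -/
open Matrix

/-- The largest eigenvalue of a real symmetric (Hermitian) matrix. -/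
noncomputable def maxEigenvalue {r : ℕ} (S : Matrix (Fin r) (Fin r) ℝ) : ℝ :=
  if h : S.IsHermitian then ⨆ i, h.eigenvalues i else 0

lemma posSemidef_trace_nonneg {k : ℕ} {M : Matrix (Fin k) (Fin k) ℝ}
    (hM : M.PosSemidef) : 0 ≤ Matrix.trace M := by
  rw [Matrix.trace]
  refine Finset.sum_nonneg fun i _ => ?_
  exact hM.diag_nonneg

lemma smul_one_sub_posSemidef {k : ℕ} {S : Matrix (Fin k) (Fin k) ℝ}
    (hS : S.IsHermitian) :
    ((⨆ i, hS.eigenvalues i) • (1 : Matrix (Fin k) (Fin k) ℝ) - S).PosSemidef := by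
  have hdecomp := hS.spectral_theorem
  generalize hl : (⨆ i, hS.eigenvalues i) = lam
  have hle : ∀ i, hS.eigenvalues i ≤ lam := fun i => hl ▸
    le_ciSup (Set.Finite.bddAbove (Set.finite_range _)) i
  set W := (hS.eigenvectorUnitary : Matrix (Fin k) (Fin k) ℝ) with hW
  have hWW : W * star W = 1 := Unitary.mul_star_self_of_mem hS.eigenvectorUnitary.2
  have hconst : Matrix.diagonal (fun _ : Fin k => lam) = lam • (1 : Matrix (Fin k) (Fin k) ℝ) := by
    ext i j
    by_cases h : i = j <;> simp [Matrix.diagonal_apply, Matrix.one_apply, h]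
  have h1 : lam • (1 : Matrix (Fin k) (Fin k) ℝ)
      = W * (Matrix.diagonal (fun _ : Fin k => lam)) * star W := by
    rw [hconst, Matrix.mul_smul, Matrix.smul_mul, Matrix.mul_one, hWW]
  have hdiag : Matrix.diagonal (RCLike.ofReal ∘ hS.eigenvalues)
      = Matrix.diagonal hS.eigenvalues := by
    congr 1
  have key : lam • (1 : Matrix (Fin k) (Fin k) ℝ) - S
      = W * (Matrix.diagonal (fun i => lam - hS.eigenvalues i)) * star W := by
    rw [h1]
    conv_lhs => rw [hdecomp]
    rw [Unitary.conjStarAlgAut_apply, ← hW, hdiag, ← Matrix.sub_mul, ← Matrix.mul_sub, Matrix.diagonal_sub]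
  rw [key]
  exact Matrix.PosSemidef.mul_mul_conjTranspose_same
    (Matrix.posSemidef_diagonal_iff.mpr fun i => by linarith [hle i]) W

/-- Key quadratic bound: `tr(Dᵀ S D) ≤ λ_max(S) · tr(Dᵀ D)` for symmetric `S`. -/
lemma trace_quad_le {k n : ℕ} {S : Matrix (Fin k) (Fin k) ℝ} (hS : S.IsHermitian)
    (D : Matrix (Fin k) (Fin n) ℝ) :
    Matrix.trace (Dᵀ * S * D) ≤ (⨆ i, hS.eigenvalues i) * Matrix.trace (Dᵀ * D) := by
  generalize hl : (⨆ i, hS.eigenvalues i) = lam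
  have hpsd := smul_one_sub_posSemidef hS
  rw [hl] at hpsd
  have hpsd2 : (Dᵀ * (lam • (1 : Matrix (Fin k) (Fin k) ℝ) - S) * D).PosSemidef := by
    simpa using hpsd.mul_mul_conjTranspose_same Dᵀ
  have h0 := posSemidef_trace_nonneg hpsd2
  have hexp : Dᵀ * (lam • (1 : Matrix (Fin k) (Fin k) ℝ) - S) * D
      = lam • (Dᵀ * D) - Dᵀ * S * D := by
    rw [Matrix.mul_sub, Matrix.sub_mul, Matrix.mul_smul, Matrix.mul_one, Matrix.smul_mul]
  rw [hexp, Matrix.trace_sub, Matrix.trace_smul] at h0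
  have := sub_nonneg.mp h0
  simpa [smul_eq_mul] using this

/-- Expansion of the squared Frobenius norm of `E - U*D`. -/
lemma expand_aux {m n r : ℕ} (E : Matrix (Fin m) (Fin n) ℝ)
    (U : Matrix (Fin m) (Fin r) ℝ) (D : Matrix (Fin r) (Fin n) ℝ) :
    Matrix.trace ((E - U * D)ᵀ * (E - U * D)) - Matrix.trace (Eᵀ * E)
      = -2 * Matrix.trace (Dᵀ * (Uᵀ * E)) + Matrix.trace (Dᵀ * (Uᵀ * U) * D) := by
  have h1 : (E - U * D)ᵀ * (E - U * D)
      = Eᵀ * E - Eᵀ * (U * D) - (U * D)ᵀ * E + (U * D)ᵀ * (U * D) := by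
    rw [Matrix.transpose_sub, Matrix.sub_mul, Matrix.mul_sub, Matrix.mul_sub]
    abel
  have h2 : Matrix.trace (Eᵀ * (U * D)) = Matrix.trace ((U * D)ᵀ * E) := by
    rw [← Matrix.trace_transpose ((U * D)ᵀ * E), Matrix.transpose_mul,
      Matrix.transpose_transpose]
  have h3 : Matrix.trace ((U * D)ᵀ * E) = Matrix.trace (Dᵀ * (Uᵀ * E)) := by
    rw [Matrix.transpose_mul, Matrix.mul_assoc]
  have h4 : (U * D)ᵀ * (U * D) = Dᵀ * (Uᵀ * U) * D := by
    rw [Matrix.transpose_mul, Matrix.mul_assoc, Matrix.mul_assoc, Matrix.mul_assoc]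
  rw [h1, Matrix.trace_add, Matrix.trace_sub, Matrix.trace_sub, h2, h3, h4]
  ring

/-- Descent lemma in `V` for `h(U,V) = ‖X - U*V‖_F²`:
`h(U,V') - h(U,V) ≤ ⟨V' - V, ∇_V h(U,V)⟩_F + (L_V/2)‖V' - V‖_F²` with
`∇_V h(U,V) = -2 Uᵀ (X - U*V)` and `L_V = 2 σ₁(Uᵀ U)`.
Frobenius inner product is `trace (Aᵀ * B)`, Frobenius norm squared is `trace (Aᵀ * A)`. -/
theorem stmt_5 {m n r : ℕ} (X : Matrix (Fin m) (Fin n) ℝ)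
    (U : Matrix (Fin m) (Fin r) ℝ) (V V' : Matrix (Fin r) (Fin n) ℝ) :
    Matrix.trace ((X - U * V')ᵀ * (X - U * V')) -
        Matrix.trace ((X - U * V)ᵀ * (X - U * V)) ≤
      Matrix.trace ((V' - V)ᵀ * ((-2 : ℝ) • (Uᵀ * (X - U * V))))
        + 2 * maxEigenvalue (Uᵀ * U) / 2 *
            Matrix.trace ((V' - V)ᵀ * (V' - V)) := by
  have hS : (Uᵀ * U).IsHermitian := by
    simpa using Matrix.isHermitian_conjTranspose_mul_self U
  have hmax : maxEigenvalue (Uᵀ * U) = ⨆ i, hS.eigenvalues i := by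
    rw [maxEigenvalue, dif_pos hS]
  have hXV' : X - U * V' = (X - U * V) - U * (V' - V) := by
    rw [Matrix.mul_sub]; abel
  have hexpand := expand_aux (X - U * V) U (V' - V)
  have hkey := trace_quad_le hS (V' - V)
  have hgrad : Matrix.trace ((V' - V)ᵀ * ((-2 : ℝ) • (Uᵀ * (X - U * V))))
      = -2 * Matrix.trace ((V' - V)ᵀ * (Uᵀ * (X - U * V))) := by
    rw [Matrix.mul_smul, Matrix.trace_smul]; simp [smul_eq_mul]
  rw [hXV', hgrad, hmax]
  have h2 : 2 * (⨆ i, hS.eigenvalues i) / 2 * Matrix.trace ((V' - V)ᵀ * (V' - V))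
      = (⨆ i, hS.eigenvalues i) * Matrix.trace ((V' - V)ᵀ * (V' - V)) := by ring
  rw [h2]
  linarith
end

section
/- Let X ∈ ℝ^{m×n}, U ∈ ℝ^{m×r}, V, V' ∈ ℝ^{r×n}, and define h(U,V) = ‖X − U·V‖_F². Suppose λ ∈ ℝ and V' satisfies the proximal descent condition ⟨V' − V, ∇_V h(U,V)⟩_F + (λ/2)·‖V' − V‖_F² ≤ 0, where ∇_V h(U,V) = −2Uᵀ·(X − U·V). Then h(U,V') ≤ h(U,V) − ((λ − L_V)/2)·‖V' − V‖_F², where L_V = 2σ₁(Uᵀ·U) with σ₁ the largest eigenvalue of Uᵀ·U. In particular, if λ ≥ L_V then h(U,V') ≤ h(U,V). -/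
open Matrix

lemma trace_transpose_mul_self_nonneg {r n : ℕ} (D : Matrix (Fin r) (Fin n) ℝ) :
    0 ≤ Matrix.trace (Dᵀ * D) := by
  simp only [Matrix.trace, Matrix.diag, Matrix.mul_apply, Matrix.transpose_apply]
  exact Finset.sum_nonneg fun _ _ => Finset.sum_nonneg fun _ _ => mul_self_nonneg _

lemma quad_form_le {r n : ℕ} (S : Matrix (Fin r) (Fin r) ℝ) (hS : S.IsHermitian)
    (D : Matrix (Fin r) (Fin n) ℝ) :
    Matrix.trace (Dᵀ * S * D) ≤ (⨆ i, hS.eigenvalues i) * Matrix.trace (Dᵀ * D) := by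
  classical
  set C : Matrix (Fin r) (Fin r) ℝ := (hS.eigenvectorUnitary : Matrix (Fin r) (Fin r) ℝ)
  set E : Matrix (Fin r) (Fin n) ℝ := Cᵀ * D with hE
  have hstar : star C = Cᵀ := by
    ext i j; simp [Matrix.conjTranspose_apply, Matrix.transpose_apply]
  have hCCt : C * Cᵀ = 1 := by
    have := (Matrix.mem_unitaryGroup_iff).mp hS.eigenvectorUnitary.2
    rwa [hstar] at this
  have hspec : S = C * Matrix.diagonal hS.eigenvalues * Cᵀ := by
    have := hS.spectral_theorem
    rw [Unitary.conjStarAlgAut_apply, hstar] at this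
    simpa using this
  have h1 : Dᵀ * S * D = Eᵀ * Matrix.diagonal hS.eigenvalues * E := by
    have := congrArg (fun M => Dᵀ * M * D) hspec
    rw [this, hE]
    simp only [Matrix.transpose_mul, Matrix.transpose_transpose, Matrix.mul_assoc]
  have h2 : Dᵀ * D = Eᵀ * E := by
    rw [hE]
    simp only [Matrix.transpose_mul, Matrix.transpose_transpose]
    rw [Matrix.mul_assoc, ← Matrix.mul_assoc C, hCCt, Matrix.one_mul]
  rw [h1, h2]
  have hbdd : BddAbove (Set.range hS.eigenvalues) := (Set.finite_range _).bddAbove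
  have hitrace : Matrix.trace (Eᵀ * Matrix.diagonal hS.eigenvalues * E)
      = ∑ i, hS.eigenvalues i * ∑ j, (E i j)^2 := by
    rw [Matrix.trace_mul_comm, ← Matrix.mul_assoc]
    simp only [Matrix.trace, Matrix.diag, Matrix.mul_apply, Matrix.transpose_apply,
      Matrix.diagonal_apply, mul_ite, mul_zero, Finset.sum_ite_eq', Finset.mem_univ,
      if_true, sq, Finset.mul_sum, Finset.sum_mul]
    exact Finset.sum_congr rfl fun i _ => Finset.sum_congr rfl fun j _ => by ring
  have htr2 : Matrix.trace (Eᵀ * E) = ∑ i, ∑ j, (E i j)^2 := by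
    simp only [Matrix.trace, Matrix.diag, Matrix.mul_apply, Matrix.transpose_apply, sq]
    rw [Finset.sum_comm]
  rw [hitrace, htr2, Finset.mul_sum]
  apply Finset.sum_le_sum
  intro i _
  apply mul_le_mul_of_nonneg_right (le_ciSup hbdd i)
  exact Finset.sum_nonneg fun _ _ => sq_nonneg _

/-- If `V'` satisfies the proximal descent condition
`⟨V' - V, ∇_V h(U,V)⟩_F + (λ/2)‖V' - V‖_F² ≤ 0` with `∇_V h(U,V) = -2 Uᵀ (X - U*V)`,
then `h(U,V') ≤ h(U,V) - ((λ - L_V)/2)‖V' - V‖_F²` where `L_V = 2 σ₁(Uᵀ U)`;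
in particular `h(U,V') ≤ h(U,V)` whenever `λ ≥ L_V`. Here `h(U,V) = ‖X - U*V‖_F²`,
the Frobenius inner product is `trace (Aᵀ * B)` and `‖A‖_F² = trace (Aᵀ * A)`. -/
theorem stmt_7 {m n r : ℕ} (X : Matrix (Fin m) (Fin n) ℝ)
    (U : Matrix (Fin m) (Fin r) ℝ) (V V' : Matrix (Fin r) (Fin n) ℝ) (lam : ℝ)
    (hprox : Matrix.trace ((V' - V)ᵀ * ((-2 : ℝ) • (Uᵀ * (X - U * V))))
        + lam / 2 * Matrix.trace ((V' - V)ᵀ * (V' - V)) ≤ 0) :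
    Matrix.trace ((X - U * V')ᵀ * (X - U * V')) ≤
      Matrix.trace ((X - U * V)ᵀ * (X - U * V))
        - (lam - 2 * maxEigenvalue (Uᵀ * U)) / 2 *
            Matrix.trace ((V' - V)ᵀ * (V' - V)) ∧
    (2 * maxEigenvalue (Uᵀ * U) ≤ lam →
      Matrix.trace ((X - U * V')ᵀ * (X - U * V')) ≤
        Matrix.trace ((X - U * V)ᵀ * (X - U * V))) := by
  set R := X - U * V with hR
  set D := V' - V with hD
  have hS : (Uᵀ * U).IsHermitian := by
    have := Matrix.isHermitian_conjTranspose_mul_self U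
    simpa [Matrix.conjTranspose_eq_transpose_of_trivial] using this
  have hmax : maxEigenvalue (Uᵀ * U) = ⨆ i, hS.eigenvalues i := by
    rw [maxEigenvalue, dif_pos hS]
  set σ := maxEigenvalue (Uᵀ * U) with hσ
  have hXV' : X - U * V' = R - U * D := by
    rw [hR, hD, Matrix.mul_sub]; abel
  have hsym : Matrix.trace (Rᵀ * (U * D)) = Matrix.trace ((U * D)ᵀ * R) := by
    rw [← Matrix.trace_transpose (Rᵀ * (U * D))]
    simp [Matrix.transpose_mul]
  have hexp : Matrix.trace ((X - U * V')ᵀ * (X - U * V'))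
      = Matrix.trace (Rᵀ * R) - 2 * Matrix.trace ((U * D)ᵀ * R)
        + Matrix.trace ((U * D)ᵀ * (U * D)) := by
    rw [hXV']
    simp only [Matrix.transpose_sub, Matrix.sub_mul, Matrix.mul_sub, Matrix.trace_sub]
    rw [hsym]; ring
  have hgrad : Matrix.trace (Dᵀ * ((-2 : ℝ) • (Uᵀ * R)))
      = -2 * Matrix.trace ((U * D)ᵀ * R) := by
    rw [Matrix.mul_smul, Matrix.trace_smul]
    simp [Matrix.transpose_mul, Matrix.mul_assoc]
  have hprox' : -2 * Matrix.trace ((U * D)ᵀ * R) + lam / 2 * Matrix.trace (Dᵀ * D) ≤ 0 := by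
    rw [← hgrad]; exact hprox
  have hquad : Matrix.trace ((U * D)ᵀ * (U * D)) ≤ σ * Matrix.trace (Dᵀ * D) := by
    have h1 : (U * D)ᵀ * (U * D) = Dᵀ * (Uᵀ * U) * D := by
      simp only [Matrix.transpose_mul, Matrix.mul_assoc]
    rw [h1, hmax]
    exact quad_form_le (Uᵀ * U) hS D
  have ht : 0 ≤ Matrix.trace (Dᵀ * D) := trace_transpose_mul_self_nonneg D
  have key : Matrix.trace ((X - U * V')ᵀ * (X - U * V')) ≤
      Matrix.trace (Rᵀ * R) - (lam - 2 * σ) / 2 * Matrix.trace (Dᵀ * D) := by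
    rw [hexp]; nlinarith [hquad, hprox']
  refine ⟨key, fun hlam => ?_⟩
  have : 0 ≤ (lam - 2 * σ) / 2 * Matrix.trace (Dᵀ * D) :=
    mul_nonneg (by linarith) ht
  linarith [key]
end

section
/- Let X ∈ ℝ^{m×n}, c > 0, and let (U_k)_{k≥0} ⊆ ℝ^{m×r}, (V_k)_{k≥0} ⊆ ℝ^{r×n} be sequences such that for every k ≥ 1: (i) ⟨U_k − U_{k−1}, ∇_U h(U_{k−1},V_{k−1})⟩_F + (μ_k/2)·‖U_k − U_{k−1}‖_F² ≤ 0 with μ_k ≥ 2σ₁(V_{k−1}·V_{k−1}ᵀ) + c, and (ii) ⟨V_k − V_{k−1}, ∇_V h(U_k,V_{k−1})⟩_F + (λ_k/2)·‖V_k − V_{k−1}‖_F² ≤ 0 with λ_k ≥ 2σ₁(U_kᵀ·U_k) + c, where h(U,V) = ‖X − U·V‖_F², ∇_U h(U,V) = −2(X − U·V)·Vᵀ, and ∇_V h(U,V) = −2Uᵀ·(X − U·V). Then for every K ≥ 1, (c/2)·Σ_{k=1}^{K} (‖U_k − U_{k−1}‖_F² + ‖V_k − V_{k−1}‖_F²)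 ≤ h(U_0, V_0); consequently the series Σ_k (‖U_k − U_{k−1}‖_F² + ‖V_k − V_{k−1}‖_F²) converges and ‖U_k − U_{k−1}‖_F → 0 and ‖V_k − V_{k−1}‖_F → 0. -/
open Matrix Filter

lemma rayleigh_le {r : ℕ} (S : Matrix (Fin r) (Fin r) ℝ) (hS : S.IsHermitian)
    (x : Fin r → ℝ) : x ⬝ᵥ S *ᵥ x ≤ maxEigenvalue S * (x ⬝ᵥ x) := by
  have hW := hS.spectral_theorem
  set W : Matrix (Fin r) (Fin r) ℝ := (hS.eigenvectorUnitary : Matrix (Fin r) (Fin r) ℝ) with hWdef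
  set y : Fin r → ℝ := star W *ᵥ x with hy
  have hxy : x ⬝ᵥ S *ᵥ x = ∑ i, hS.eigenvalues i * (y i)^2 := by
    conv_lhs => rw [hW, Unitary.conjStarAlgAut_apply]
    rw [← mulVec_mulVec, ← mulVec_mulVec]
    rw [dotProduct_mulVec (v := x)]
    have hxW : x ᵥ* W = y := by
      rw [hy]
      have : (star W : Matrix (Fin r) (Fin r) ℝ) = Wᵀ := by
        rw [star_eq_conjTranspose, conjTranspose_eq_transpose_of_trivial]
      rw [this, mulVec_transpose]
    rw [hxW]
    have : (star W : Matrix (Fin r) (Fin r) ℝ) *ᵥ x = y := rfl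
    rw [this]
    simp [dotProduct, mulVec, diagonal, dotProduct, Function.comp]
    ring_nf
    apply Finset.sum_congr rfl
    intro i _
    ring
  have hWs : W * star W = 1 := (Matrix.mem_unitaryGroup_iff).mp (hS.eigenvectorUnitary).2
  have hyy : y ⬝ᵥ y = x ⬝ᵥ x := by
    have h1 : y ᵥ* star W = x := by
      have hsW : (star W : Matrix (Fin r) (Fin r) ℝ) = Wᵀ := by
        rw [star_eq_conjTranspose, conjTranspose_eq_transpose_of_trivial]
      rw [hsW, vecMul_transpose, hy, hsW, mulVec_mulVec, ← hsW, hWs, one_mulVec]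
    conv_lhs => rw [hy, dotProduct_mulVec, h1]
  have hmax : maxEigenvalue S = ⨆ i, hS.eigenvalues i := by
    rw [maxEigenvalue, dif_pos hS]
  rw [hxy, ← hyy, hmax]
  have hdd : y ⬝ᵥ y = ∑ i, (y i)^2 := by
    simp [dotProduct, pow_two]
  rw [hdd, Finset.mul_sum]
  apply Finset.sum_le_sum
  intro i _
  exact mul_le_mul_of_nonneg_right (le_ciSup (Set.finite_range _).bddAbove i) (sq_nonneg _)

lemma trace_sq_nonneg {a b : ℕ} (A : Matrix (Fin a) (Fin b) ℝ) :
    0 ≤ Matrix.trace (Aᵀ * A) := by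
  have : Matrix.trace (Aᵀ * A) = ∑ i, ∑ j, (A j i)^2 := by
    simp [Matrix.trace, Matrix.mul_apply, Matrix.diag, pow_two]
  rw [this]
  positivity

lemma trace_tmul {a b : ℕ} (M : Matrix (Fin a) (Fin b) ℝ) :
    Matrix.trace (Mᵀ * M) = ∑ j, ∑ i, (M j i)^2 := by
  simp only [Matrix.trace, Matrix.mul_apply, Matrix.diag, Matrix.transpose_apply, pow_two]
  exact Finset.sum_comm

lemma key_trace {a b d : ℕ} (A : Matrix (Fin a) (Fin d) ℝ) (V : Matrix (Fin d) (Fin b) ℝ) :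
    Matrix.trace ((A * V)ᵀ * (A * V)) ≤ maxEigenvalue (V * Vᵀ) * Matrix.trace (Aᵀ * A) := by
  have hherm : (V * Vᵀ).IsHermitian := by
    apply Matrix.isHermitian_mul_conjTranspose_self
  have h1 : Matrix.trace ((A * V)ᵀ * (A * V)) = ∑ j, (A j) ⬝ᵥ (V * Vᵀ) *ᵥ (A j) := by
    rw [trace_tmul]
    apply Finset.sum_congr rfl; intro j _
    have hy : ∀ i, (A * V) j i = (Vᵀ *ᵥ (A j)) i := by
      intro i
      simp [Matrix.mul_apply, Matrix.mulVec, dotProduct, mul_comm]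
    rw [← mulVec_mulVec, dotProduct_mulVec (v := A j), ← mulVec_transpose]
    simp only [hy]
    simp [dotProduct, pow_two]
  have h2 : Matrix.trace (Aᵀ * A) = ∑ j, (A j) ⬝ᵥ (A j) := by
    rw [trace_tmul]
    simp [dotProduct, pow_two]
  rw [h1, h2, Finset.mul_sum]
  exact Finset.sum_le_sum fun j _ => rayleigh_le _ hherm _

lemma key_trace_left {a b d : ℕ} (Uu : Matrix (Fin a) (Fin d) ℝ) (B : Matrix (Fin d) (Fin b) ℝ) :
    Matrix.trace ((Uu * B)ᵀ * (Uu * B)) ≤ maxEigenvalue (Uuᵀ * Uu) * Matrix.trace (Bᵀ * B) := by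
  have h := key_trace Bᵀ Uuᵀ
  rw [Matrix.transpose_transpose] at h
  have h1 : Matrix.trace ((Uu * B)ᵀ * (Uu * B)) = Matrix.trace ((Bᵀ * Uuᵀ)ᵀ * (Bᵀ * Uuᵀ)) := by
    rw [Matrix.transpose_mul, Matrix.transpose_mul, Matrix.transpose_transpose,
      Matrix.transpose_transpose, Matrix.trace_mul_comm, ← Matrix.mul_assoc,
      Matrix.mul_assoc]
  have h2 : Matrix.trace (B * Bᵀ) = Matrix.trace (Bᵀ * B) := Matrix.trace_mul_comm _ _
  rw [h1]
  calc Matrix.trace ((Bᵀ * Uuᵀ)ᵀ * (Bᵀ * Uuᵀ)) ≤ maxEigenvalue (Uuᵀ * Uu) * Matrix.trace (B * Bᵀ) := h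
  _ = maxEigenvalue (Uuᵀ * Uu) * Matrix.trace (Bᵀ * B) := by rw [h2]

lemma expandU {m n r : ℕ} (E : Matrix (Fin m) (Fin n) ℝ) (Δ : Matrix (Fin m) (Fin r) ℝ)
    (V : Matrix (Fin r) (Fin n) ℝ) :
    Matrix.trace ((E - Δ * V)ᵀ * (E - Δ * V)) =
      Matrix.trace (Eᵀ * E) + Matrix.trace (Δᵀ * ((-2 : ℝ) • (E * Vᵀ)))
        + Matrix.trace ((Δ * V)ᵀ * (Δ * V)) := by
  have hsym : Matrix.trace (Eᵀ * (Δ * V)) = Matrix.trace ((Δ * V)ᵀ * E) := by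
    rw [← Matrix.trace_transpose (Eᵀ * (Δ * V)), Matrix.transpose_mul,
      Matrix.transpose_transpose]
  have hcyc : Matrix.trace ((Δ * V)ᵀ * E) = Matrix.trace (Δᵀ * (E * Vᵀ)) := by
    rw [Matrix.transpose_mul, Matrix.mul_assoc, Matrix.trace_mul_comm, Matrix.mul_assoc]
  rw [Matrix.transpose_sub, Matrix.sub_mul, Matrix.mul_sub, Matrix.mul_sub,
    Matrix.trace_sub, Matrix.trace_sub, Matrix.trace_sub, Matrix.mul_smul,
    Matrix.trace_smul, smul_eq_mul]
  linarith [hsym, hcyc]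

lemma expandV {m n r : ℕ} (E : Matrix (Fin m) (Fin n) ℝ) (Uu : Matrix (Fin m) (Fin r) ℝ)
    (Δ : Matrix (Fin r) (Fin n) ℝ) :
    Matrix.trace ((E - Uu * Δ)ᵀ * (E - Uu * Δ)) =
      Matrix.trace (Eᵀ * E) + Matrix.trace (Δᵀ * ((-2 : ℝ) • (Uuᵀ * E)))
        + Matrix.trace ((Uu * Δ)ᵀ * (Uu * Δ)) := by
  have hsym : Matrix.trace (Eᵀ * (Uu * Δ)) = Matrix.trace ((Uu * Δ)ᵀ * E) := by
    rw [← Matrix.trace_transpose (Eᵀ * (Uu * Δ)), Matrix.transpose_mul,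
      Matrix.transpose_transpose]
  have hcyc : Matrix.trace ((Uu * Δ)ᵀ * E) = Matrix.trace (Δᵀ * (Uuᵀ * E)) := by
    rw [Matrix.transpose_mul, Matrix.mul_assoc]
  rw [Matrix.transpose_sub, Matrix.sub_mul, Matrix.mul_sub, Matrix.mul_sub,
    Matrix.trace_sub, Matrix.trace_sub, Matrix.trace_sub, Matrix.mul_smul,
    Matrix.trace_smul, smul_eq_mul]
  linarith [hsym, hcyc]

/-- Square-summability of successive differences of PALM iterates for
`h(U,V) = ‖X - U*V‖_F²` when the step parameters exceed the Lipschitz constants by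
a margin `c > 0` (the iterate at "time k" of the paper is `k+1`):
`(c/2) Σ_{k=1}^K (‖U_k - U_{k-1}‖_F² + ‖V_k - V_{k-1}‖_F²) ≤ h(U_0,V_0)`,
the series converges, and `‖U_k - U_{k-1}‖_F → 0`, `‖V_k - V_{k-1}‖_F → 0`.
The Frobenius inner product is `trace (Aᵀ * B)` and `‖A‖_F² = trace (Aᵀ * A)`;
`∇_U h(U,V) = -2 (X - U*V) Vᵀ`, `∇_V h(U,V) = -2 Uᵀ (X - U*V)`. -/
theorem stmt_9 {m n r : ℕ} (X : Matrix (Fin m) (Fin n) ℝ) (c : ℝ) (hc : 0 < c)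
    (U : ℕ → Matrix (Fin m) (Fin r) ℝ) (V : ℕ → Matrix (Fin r) (Fin n) ℝ)
    (μ lam : ℕ → ℝ)
    (hUprox : ∀ k : ℕ,
      Matrix.trace ((U (k+1) - U k)ᵀ * ((-2 : ℝ) • ((X - U k * V k) * (V k)ᵀ)))
        + μ (k+1) / 2 * Matrix.trace ((U (k+1) - U k)ᵀ * (U (k+1) - U k)) ≤ 0)
    (hμ : ∀ k : ℕ, 2 * maxEigenvalue (V k * (V k)ᵀ) + c ≤ μ (k+1))
    (hVprox : ∀ k : ℕ,
      Matrix.trace ((V (k+1) - V k)ᵀ * ((-2 : ℝ) • ((U (k+1))ᵀ * (X - U (k+1) * V k))))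
        + lam (k+1) / 2 * Matrix.trace ((V (k+1) - V k)ᵀ * (V (k+1) - V k)) ≤ 0)
    (hlam : ∀ k : ℕ, 2 * maxEigenvalue ((U (k+1))ᵀ * U (k+1)) + c ≤ lam (k+1)) :
    (∀ K : ℕ, 1 ≤ K →
      c / 2 * ∑ k ∈ Finset.range K,
          (Matrix.trace ((U (k+1) - U k)ᵀ * (U (k+1) - U k))
            + Matrix.trace ((V (k+1) - V k)ᵀ * (V (k+1) - V k))) ≤
        Matrix.trace ((X - U 0 * V 0)ᵀ * (X - U 0 * V 0))) ∧
    Summable (fun k : ℕ =>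
      Matrix.trace ((U (k+1) - U k)ᵀ * (U (k+1) - U k))
        + Matrix.trace ((V (k+1) - V k)ᵀ * (V (k+1) - V k))) ∧
    Tendsto (fun k : ℕ =>
        Real.sqrt (Matrix.trace ((U (k+1) - U k)ᵀ * (U (k+1) - U k))))
      atTop (nhds 0) ∧
    Tendsto (fun k : ℕ =>
        Real.sqrt (Matrix.trace ((V (k+1) - V k)ᵀ * (V (k+1) - V k))))
      atTop (nhds 0) := by
  set f : ℕ → ℝ := fun k => Matrix.trace ((X - U k * V k)ᵀ * (X - U k * V k)) with hf
  set tU : ℕ → ℝ := fun k => Matrix.trace ((U (k+1) - U k)ᵀ * (U (k+1) - U k)) with htU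
  set tV : ℕ → ℝ := fun k => Matrix.trace ((V (k+1) - V k)ᵀ * (V (k+1) - V k)) with htV
  have htU0 : ∀ k, 0 ≤ tU k := fun k => trace_sq_nonneg _
  have htV0 : ∀ k, 0 ≤ tV k := fun k => trace_sq_nonneg _
  have hf0 : ∀ k, 0 ≤ f k := fun k => trace_sq_nonneg _
  have step : ∀ k, f (k+1) + c/2 * (tU k + tV k) ≤ f k := by
    intro k
    set E : Matrix (Fin m) (Fin n) ℝ := X - U k * V k with hE
    set Δ : Matrix (Fin m) (Fin r) ℝ := U (k+1) - U k with hΔ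
    set E' : Matrix (Fin m) (Fin n) ℝ := X - U (k+1) * V k with hE'
    set Δ' : Matrix (Fin r) (Fin n) ℝ := V (k+1) - V k with hΔ'
    have hEeq : E' = E - Δ * V k := by
      rw [hE', hE, hΔ, Matrix.sub_mul]; abel
    have hE'eq : X - U (k+1) * V (k+1) = E' - U (k+1) * Δ' := by
      rw [hE', hΔ', Matrix.mul_sub]; abel
    set g : ℝ := Matrix.trace (E'ᵀ * E') with hg
    have hstepU : g ≤ f k - c/2 * tU k := by
      have hexp := expandU E Δ (V k)
      rw [← hEeq] at hexp
      have hprox := hUprox k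
      have hkey := key_trace Δ (V k)
      have hμk := hμ k
      have hmul : maxEigenvalue (V k * (V k)ᵀ) * tU k ≤ (μ (k+1) - c)/2 * tU k := by
        apply mul_le_mul_of_nonneg_right _ (htU0 k)
        linarith
      simp only [hg, hf, htU] at *
      linarith
    have hstepV : f (k+1) ≤ g - c/2 * tV k := by
      have hexp := expandV E' (U (k+1)) Δ'
      rw [← hE'eq] at hexp
      have hprox := hVprox k
      have hkey := key_trace_left (U (k+1)) Δ'
      have hlamk := hlam k
      have hmul : maxEigenvalue ((U (k+1))ᵀ * U (k+1)) * tV k ≤ (lam (k+1) - c)/2 * tV k := by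
        apply mul_le_mul_of_nonneg_right _ (htV0 k)
        linarith
      simp only [hg, hf, htV] at *
      linarith
    linarith
  have tele : ∀ K : ℕ, f K + c/2 * ∑ k ∈ Finset.range K, (tU k + tV k) ≤ f 0 := by
    intro K
    induction K with
    | zero => simp
    | succ K ih =>
      rw [Finset.sum_range_succ]
      have := step K
      linarith
  have part1 : ∀ K : ℕ, 1 ≤ K → c / 2 * ∑ k ∈ Finset.range K, (tU k + tV k) ≤ f 0 := by
    intro K _
    have := tele K
    linarith [hf0 K]
  have hsumle : ∀ K : ℕ, ∑ k ∈ Finset.range K, (tU k + tV k) ≤ 2/c * f 0 := by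
    intro K
    have h : c/2 * ∑ k ∈ Finset.range K, (tU k + tV k) ≤ f 0 := by
      linarith [tele K, hf0 K]
    have h3 := mul_le_mul_of_nonneg_left h (le_of_lt (by positivity : (0:ℝ) < 2/c))
    have h4 : 2/c * (c/2 * ∑ k ∈ Finset.range K, (tU k + tV k))
        = ∑ k ∈ Finset.range K, (tU k + tV k) := by
      field_simp
    linarith
  have hsummable : Summable (fun k => tU k + tV k) :=
    summable_of_sum_range_le (fun k => by linarith [htU0 k, htV0 k]) hsumle
  have hten : Tendsto (fun k => tU k + tV k) atTop (nhds 0) :=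
    hsummable.tendsto_atTop_zero
  have htenU : Tendsto tU atTop (nhds 0) :=
    squeeze_zero htU0 (fun k => by linarith [htV0 k]) hten
  have htenV : Tendsto tV atTop (nhds 0) :=
    squeeze_zero htV0 (fun k => by linarith [htU0 k]) hten
  have hsq : Tendsto Real.sqrt (nhds 0) (nhds 0) := by
    have := Real.continuous_sqrt.tendsto 0
    rwa [Real.sqrt_zero] at this
  exact ⟨part1, hsummable, hsq.comp htenU, hsq.comp htenV⟩
end
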